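/- Assume U satisfies A1(1) (i.e., β = 1). Then for every T ∈ ℕ* there exists h̄_T > 0 such that for all h ∈ (0,h̄_T]: (1) the Lebesgue measure is an irreducibility measure for the HMC kernel P_{h,T}, i.e., for every Borel A ⊆ ℝ^d with Leb(A) > 0 and every q ∈ ℝ^d, Σ_{n≥1} P_{h,T}^n(q,A) > 0; and (2) every compact set C ⊂ ℝ^d is small: there exist ε > 0 and M > 0 such that for all q ∈ C and all Borel A, P_{h,T}(q,A) ≥ ε Leb(A ∩ B(0,M)). -/

import Mathlib

open Real MeasureTheory Filter
open scoped NNReal ENNReal Pointwise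
noncomputable section

/-- One leapfrog (Störmer–Verlet) step for the potential `U` with step size `h`. -/
def leapfrog {d : ℕ} (U : EuclideanSpace ℝ (Fin d) → ℝ) (h : ℝ)
    (x : EuclideanSpace ℝ (Fin d) × EuclideanSpace ℝ (Fin d)) :
    EuclideanSpace ℝ (Fin d) × EuclideanSpace ℝ (Fin d) :=
  let p2 := x.2 - (h / 2) • gradient U x.1
  let q' := x.1 + h • p2
  (q', p2 - (h / 2) • gradient U q')

/-- The Hamiltonian `H(q,p) = U(q) + ‖p‖²/2`. -/
def hamiltonian {d : ℕ} (U : EuclideanSpace ℝ (Fin d) → ℝ)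
    (x : EuclideanSpace ℝ (Fin d) × EuclideanSpace ℝ (Fin d)) : ℝ :=
  U x.1 + ‖x.2‖ ^ 2 / 2

/-- Acceptance probability `α(x,y) = min(1, exp(H(x) − H(y)))`. -/
def hmcAccept {d : ℕ} (U : EuclideanSpace ℝ (Fin d) → ℝ)
    (x y : EuclideanSpace ℝ (Fin d) × EuclideanSpace ℝ (Fin d)) : ℝ :=
  min 1 (Real.exp (hamiltonian U x - hamiltonian U y))

/-- The HMC Markov kernel `P_{h,T}(q, ·)`, as a measure on `ℝ^d`. -/
def hmcP {d : ℕ} (U : EuclideanSpace ℝ (Fin d) → ℝ) (h : ℝ) (T : ℕ)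
    (q : EuclideanSpace ℝ (Fin d)) : Measure (EuclideanSpace ℝ (Fin d)) :=
  Measure.map (fun p => ((leapfrog U h)^[T] (q, p)).1)
    (volume.withDensity fun p => ENNReal.ofReal
      ((2 * π) ^ (-(d : ℝ) / 2) * hmcAccept U (q, p) ((leapfrog U h)^[T] (q, p)) *
        Real.exp (-‖p‖ ^ 2 / 2))) +
  ENNReal.ofReal ((2 * π) ^ (-(d : ℝ) / 2) *
      ∫ p, (1 - hmcAccept U (q, p) ((leapfrog U h)^[T] (q, p))) *
        Real.exp (-‖p‖ ^ 2 / 2)) • Measure.dirac q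

/-- Iterates `P_{h,T}^n(q, ·)` of the HMC kernel. -/
def hmcIter {d : ℕ} (U : EuclideanSpace ℝ (Fin d) → ℝ) (h : ℝ) (T : ℕ) :
    ℕ → EuclideanSpace ℝ (Fin d) → Measure (EuclideanSpace ℝ (Fin d))
  | 0 => fun q => Measure.dirac q
  | n + 1 => fun q => (hmcP U h T q).bind (hmcIter U h T n)

section aux
open Metric Set

variable {d : ℕ} {U : EuclideanSpace ℝ (Fin d) → ℝ} {h : ℝ}

lemma lf_fst (x : EuclideanSpace ℝ (Fin d) × EuclideanSpace ℝ (Fin d)) :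
    (leapfrog U h x).1 = x.1 + h • (x.2 - (h / 2) • gradient U x.1) := rfl

lemma lf_snd (x : EuclideanSpace ℝ (Fin d) × EuclideanSpace ℝ (Fin d)) :
    (leapfrog U h x).2 = (x.2 - (h / 2) • gradient U x.1)
      - (h / 2) • gradient U (leapfrog U h x).1 := rfl

lemma smul_norm_eq {c : ℝ} (hc : 0 ≤ c) (v : EuclideanSpace ℝ (Fin d)) :
    ‖c • v‖ = c * ‖v‖ := by
  rw [norm_smul, Real.norm_eq_abs, abs_of_nonneg hc]

lemma step_growth {M₁ : ℝ} (hM₁ : 0 ≤ M₁)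
    (hG : ∀ q, ‖gradient U q‖ ≤ M₁ * (1 + ‖q‖)) (hh : 0 ≤ h) (h1 : h ≤ 1)
    (x : EuclideanSpace ℝ (Fin d) × EuclideanSpace ℝ (Fin d)) :
    1 + ‖(leapfrog U h x).1‖ + ‖(leapfrog U h x).2‖
      ≤ (2 + M₁) ^ 3 * (1 + ‖x.1‖ + ‖x.2‖) := by
  have hq := norm_nonneg x.1
  have hp := norm_nonneg x.2
  have hgq := hG x.1
  have hgq0 := norm_nonneg (gradient U x.1)
  have hp2 : ‖x.2 - (h / 2) • gradient U x.1‖ ≤ ‖x.2‖ + (h / 2) * ‖gradient U x.1‖ := by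
    refine (norm_sub_le _ _).trans ?_
    rw [smul_norm_eq (by linarith)]
  have hp2' : ‖x.2 - (h / 2) • gradient U x.1‖ ≤ (1 + M₁) * (1 + ‖x.1‖ + ‖x.2‖) := by
    have e1 : (h / 2) * ‖gradient U x.1‖ ≤ (1 / 2) * (M₁ * (1 + ‖x.1‖)) :=
      mul_le_mul (by linarith) hgq hgq0 (by norm_num)
    nlinarith [mul_nonneg hM₁ hq, mul_nonneg hM₁ hp]
  have hq' : ‖(leapfrog U h x).1‖ ≤ ‖x.1‖ + h * ‖x.2 - (h / 2) • gradient U x.1‖ := by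
    rw [lf_fst]
    refine (norm_add_le _ _).trans ?_
    rw [smul_norm_eq hh]
  have hq'' : ‖(leapfrog U h x).1‖ ≤ (2 + M₁) * (1 + ‖x.1‖ + ‖x.2‖) := by
    have e2 : h * ‖x.2 - (h / 2) • gradient U x.1‖ ≤ 1 * ((1 + M₁) * (1 + ‖x.1‖ + ‖x.2‖)) :=
      mul_le_mul h1 hp2' (norm_nonneg _) (by norm_num)
    nlinarith [mul_nonneg hM₁ hq, mul_nonneg hM₁ hp]
  have hgq' := hG (leapfrog U h x).1
  have hgq'0 := norm_nonneg (gradient U (leapfrog U h x).1)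
  have hp' : ‖(leapfrog U h x).2‖
      ≤ ‖x.2 - (h / 2) • gradient U x.1‖ + (h / 2) * ‖gradient U (leapfrog U h x).1‖ := by
    rw [lf_snd]
    refine (norm_sub_le _ _).trans ?_
    rw [smul_norm_eq (by linarith)]
  have e3 : (h / 2) * ‖gradient U (leapfrog U h x).1‖
      ≤ (1 / 2) * (M₁ * (1 + (2 + M₁) * (1 + ‖x.1‖ + ‖x.2‖))) := by
    refine mul_le_mul (by linarith) ?_ hgq'0 (by norm_num)
    refine hgq'.trans ?_
    have : 0 ≤ M₁ := hM₁
    nlinarith [hq'']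
  nlinarith [mul_nonneg hM₁ hq, mul_nonneg hM₁ hp, mul_nonneg (mul_nonneg hM₁ hM₁) hq,
    mul_nonneg (mul_nonneg hM₁ hM₁) hp, mul_nonneg hM₁ hM₁,
    mul_nonneg (mul_nonneg (mul_nonneg hM₁ hM₁) hM₁) (by linarith : (0:ℝ) ≤ 1 + ‖x.1‖ + ‖x.2‖)]

lemma iter_growth {M₁ : ℝ} (hM₁ : 0 ≤ M₁)
    (hG : ∀ q, ‖gradient U q‖ ≤ M₁ * (1 + ‖q‖)) (hh : 0 ≤ h) (h1 : h ≤ 1)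
    (x : EuclideanSpace ℝ (Fin d) × EuclideanSpace ℝ (Fin d)) (k : ℕ) :
    1 + ‖((leapfrog U h)^[k] x).1‖ + ‖((leapfrog U h)^[k] x).2‖
      ≤ (2 + M₁) ^ (3 * k) * (1 + ‖x.1‖ + ‖x.2‖) := by
  induction k with
  | zero => simp
  | succ k ih =>
    rw [Function.iterate_succ_apply']
    refine (step_growth hM₁ hG hh h1 _).trans ?_
    have h2 : (2 + M₁) ^ 3 * ((1 : ℝ) + ‖((leapfrog U h)^[k] x).1‖ + ‖((leapfrog U h)^[k] x).2‖)
        ≤ (2 + M₁) ^ 3 * ((2 + M₁) ^ (3 * k) * (1 + ‖x.1‖ + ‖x.2‖)) :=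
      mul_le_mul_of_nonneg_left ih (pow_nonneg (by linarith) 3)
    refine h2.trans_eq ?_
    rw [show 3 * (k + 1) = 3 + 3 * k by ring, pow_add]
    ring
lemma step_diff {L₁ : ℝ} (hL₁ : 0 ≤ L₁)
    (hLip : ∀ q q', ‖gradient U q - gradient U q'‖ ≤ L₁ * ‖q - q'‖)
    (hh : 0 ≤ h) (h1 : h ≤ 1) (x y : EuclideanSpace ℝ (Fin d) × EuclideanSpace ℝ (Fin d)) :
    ‖(leapfrog U h x).1 - (leapfrog U h y).1‖ + ‖(leapfrog U h x).2 - (leapfrog U h y).2‖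
      ≤ (2 + L₁) ^ 2 * (‖x.1 - y.1‖ + ‖x.2 - y.2‖) := by
  have hdq := norm_nonneg (x.1 - y.1)
  have hdp := norm_nonneg (x.2 - y.2)
  have e1 : (leapfrog U h x).1 - (leapfrog U h y).1
      = (x.1 - y.1) + h • (x.2 - y.2) - (h * h / 2) • (gradient U x.1 - gradient U y.1) := by
    simp only [lf_fst]; module
  have e2 : (leapfrog U h x).2 - (leapfrog U h y).2
      = (x.2 - y.2) - (h / 2) • (gradient U x.1 - gradient U y.1)
        - (h / 2) • (gradient U (leapfrog U h x).1 - gradient U (leapfrog U h y).1) := by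
    simp only [lf_snd]; module
  have n1 : ‖(leapfrog U h x).1 - (leapfrog U h y).1‖
      ≤ ‖x.1 - y.1‖ + h * ‖x.2 - y.2‖ + (h * h / 2) * (L₁ * ‖x.1 - y.1‖) := by
    rw [e1]
    refine (norm_sub_le _ _).trans ?_
    have := norm_add_le (x.1 - y.1) (h • (x.2 - y.2))
    rw [smul_norm_eq hh] at this
    rw [smul_norm_eq (by nlinarith)]
    have h3 := mul_le_mul_of_nonneg_left (hLip x.1 y.1) (by nlinarith : (0:ℝ) ≤ h * h / 2)
    linarith
  have bq : ‖(leapfrog U h x).1 - (leapfrog U h y).1‖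
      ≤ (2 + L₁) * (‖x.1 - y.1‖ + ‖x.2 - y.2‖) := by
    have e3 : h * ‖x.2 - y.2‖ ≤ ‖x.2 - y.2‖ := by nlinarith
    have e4 : (h * h / 2) * (L₁ * ‖x.1 - y.1‖) ≤ (1 / 2) * (L₁ * ‖x.1 - y.1‖) := by
      refine mul_le_mul_of_nonneg_right ?_ (mul_nonneg hL₁ hdq)
      nlinarith
    nlinarith [mul_nonneg hL₁ hdp]
  have n2 : ‖(leapfrog U h x).2 - (leapfrog U h y).2‖
      ≤ ‖x.2 - y.2‖ + (h / 2) * (L₁ * ‖x.1 - y.1‖)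
        + (h / 2) * (L₁ * ‖(leapfrog U h x).1 - (leapfrog U h y).1‖) := by
    rw [e2]
    refine (norm_sub_le _ _).trans ?_
    have h5 := norm_sub_le (x.2 - y.2) ((h / 2) • (gradient U x.1 - gradient U y.1))
    rw [smul_norm_eq (by linarith)] at h5
    rw [smul_norm_eq (by linarith)]
    have h6 := mul_le_mul_of_nonneg_left (hLip x.1 y.1) (by linarith : (0:ℝ) ≤ h / 2)
    have h7 := mul_le_mul_of_nonneg_left
      (hLip (leapfrog U h x).1 (leapfrog U h y).1) (by linarith : (0:ℝ) ≤ h / 2)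
    linarith
  have bp : ‖(leapfrog U h x).2 - (leapfrog U h y).2‖
      ≤ (‖x.1 - y.1‖ + ‖x.2 - y.2‖) + (L₁ / 2) * (‖x.1 - y.1‖ + ‖x.2 - y.2‖)
        + (L₁ / 2) * ((2 + L₁) * (‖x.1 - y.1‖ + ‖x.2 - y.2‖)) := by
    have e5 : (h / 2) * (L₁ * ‖x.1 - y.1‖) ≤ (L₁ / 2) * (‖x.1 - y.1‖ + ‖x.2 - y.2‖) := by
      nlinarith [mul_nonneg hL₁ hdq, mul_nonneg hL₁ hdp]
    have e6 : (h / 2) * (L₁ * ‖(leapfrog U h x).1 - (leapfrog U h y).1‖)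
        ≤ (L₁ / 2) * ((2 + L₁) * (‖x.1 - y.1‖ + ‖x.2 - y.2‖)) := by
      have e7 : L₁ * ‖(leapfrog U h x).1 - (leapfrog U h y).1‖
          ≤ L₁ * ((2 + L₁) * (‖x.1 - y.1‖ + ‖x.2 - y.2‖)) :=
        mul_le_mul_of_nonneg_left bq hL₁
      have e8 : (h / 2) * (L₁ * ‖(leapfrog U h x).1 - (leapfrog U h y).1‖)
          ≤ (1 / 2) * (L₁ * ((2 + L₁) * (‖x.1 - y.1‖ + ‖x.2 - y.2‖))) := by
        refine mul_le_mul (by linarith) e7 (mul_nonneg hL₁ (norm_nonneg _)) (by norm_num)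
      linarith [e8]
    linarith [n2, e5, e6]
  nlinarith [mul_nonneg hL₁ (add_nonneg hdq hdp), mul_nonneg (mul_nonneg hL₁ hL₁) (add_nonneg hdq hdp)]

lemma iter_diff {L₁ : ℝ} (hL₁ : 0 ≤ L₁)
    (hLip : ∀ q q', ‖gradient U q - gradient U q'‖ ≤ L₁ * ‖q - q'‖)
    (hh : 0 ≤ h) (h1 : h ≤ 1) (x y : EuclideanSpace ℝ (Fin d) × EuclideanSpace ℝ (Fin d)) (k : ℕ) :
    ‖((leapfrog U h)^[k] x).1 - ((leapfrog U h)^[k] y).1‖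
      + ‖((leapfrog U h)^[k] x).2 - ((leapfrog U h)^[k] y).2‖
      ≤ (2 + L₁) ^ (2 * k) * (‖x.1 - y.1‖ + ‖x.2 - y.2‖) := by
  induction k with
  | zero => simp
  | succ k ih =>
    rw [Function.iterate_succ_apply', Function.iterate_succ_apply']
    refine (step_diff hL₁ hLip hh h1 _ _).trans ?_
    have h2 := mul_le_mul_of_nonneg_left ih (pow_nonneg (by linarith : (0:ℝ) ≤ 2 + L₁) 2)
    refine h2.trans_eq ?_
    rw [show 2 * (k + 1) = 2 + 2 * k by ring, pow_add]
    ring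

lemma lf_linearize {L₁ : ℝ} (hL₁ : 0 ≤ L₁)
    (hLip : ∀ q q', ‖gradient U q - gradient U q'‖ ≤ L₁ * ‖q - q'‖)
    (hh : 0 ≤ h) (h1 : h ≤ 1) (q p p' : EuclideanSpace ℝ (Fin d)) (k : ℕ) :
    ‖(((leapfrog U h)^[k] (q, p)).2 - ((leapfrog U h)^[k] (q, p')).2) - (p - p')‖
        ≤ (k : ℝ) * h * L₁ * (2 + L₁) ^ (2 * k) * ‖p - p'‖ ∧
      ‖(((leapfrog U h)^[k] (q, p)).1 - ((leapfrog U h)^[k] (q, p')).1)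
          - ((k : ℝ) * h) • (p - p')‖
        ≤ (k : ℝ) * ((k : ℝ) + 1) * h ^ 2 * L₁ * (2 + L₁) ^ (2 * k) * ‖p - p'‖ := by
  have hD := norm_nonneg (p - p')
  have hbase : (1 : ℝ) ≤ 2 + L₁ := by linarith
  induction k with
  | zero => simp
  | succ k ih =>
    obtain ⟨ihv, ihu⟩ := ih
    set x := (leapfrog U h)^[k] (q, p) with hx
    set y := (leapfrog U h)^[k] (q, p') with hy
    have crude : ‖x.1 - y.1‖ + ‖x.2 - y.2‖ ≤ (2 + L₁) ^ (2 * k) * ‖p - p'‖ := by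
      have := iter_diff hL₁ hLip hh h1 (q, p) (q, p') k
      simpa using this
    have crude' : ‖((leapfrog U h)^[k+1] (q, p)).1 - ((leapfrog U h)^[k+1] (q, p')).1‖
        + ‖((leapfrog U h)^[k+1] (q, p)).2 - ((leapfrog U h)^[k+1] (q, p')).2‖
        ≤ (2 + L₁) ^ (2 * (k + 1)) * ‖p - p'‖ := by
      have := iter_diff hL₁ hLip hh h1 (q, p) (q, p') (k + 1)
      simpa using this
    have hCk : ((2 : ℝ) + L₁) ^ (2 * k) ≤ (2 + L₁) ^ (2 * (k + 1)) :=
      pow_le_pow_right₀ hbase (by omega)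
    have hCp0 : (0 : ℝ) ≤ (2 + L₁) ^ (2 * (k + 1)) := pow_nonneg (by linarith) _
    have hCk0 : (0 : ℝ) ≤ (2 + L₁) ^ (2 * k) := pow_nonneg (by linarith) _
    have hxq := norm_nonneg (x.1 - y.1)
    have hxp := norm_nonneg (x.2 - y.2)
    -- gradient difference bounds
    have g1 : ‖gradient U x.1 - gradient U y.1‖ ≤ L₁ * ((2 + L₁) ^ (2 * (k+1)) * ‖p - p'‖) := by
      refine (hLip x.1 y.1).trans ?_
      refine mul_le_mul_of_nonneg_left ?_ hL₁
      refine le_trans (by linarith) (le_trans crude ?_)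
      exact mul_le_mul_of_nonneg_right hCk hD
    have g2 : ‖gradient U ((leapfrog U h)^[k+1] (q, p)).1
          - gradient U ((leapfrog U h)^[k+1] (q, p')).1‖
        ≤ L₁ * ((2 + L₁) ^ (2 * (k+1)) * ‖p - p'‖) := by
      refine (hLip _ _).trans ?_
      refine mul_le_mul_of_nonneg_left ?_ hL₁
      linarith [crude', norm_nonneg (((leapfrog U h)^[k+1] (q, p)).2 - ((leapfrog U h)^[k+1] (q, p')).2)]
    constructor
    · -- momentum deviation
      have ev : (((leapfrog U h)^[k+1] (q, p)).2 - ((leapfrog U h)^[k+1] (q, p')).2) - (p - p')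
          = ((x.2 - y.2) - (p - p'))
            - (h / 2) • (gradient U x.1 - gradient U y.1)
            - (h / 2) • (gradient U ((leapfrog U h)^[k+1] (q, p)).1
                - gradient U ((leapfrog U h)^[k+1] (q, p')).1) := by
        rw [Function.iterate_succ_apply', Function.iterate_succ_apply', ← hx, ← hy]
        simp only [lf_snd, lf_fst]
        module
      rw [ev]
      have n1 := norm_sub_le (((x.2 - y.2) - (p - p'))
            - (h / 2) • (gradient U x.1 - gradient U y.1))
        ((h / 2) • (gradient U ((leapfrog U h)^[k+1] (q, p)).1
                - gradient U ((leapfrog U h)^[k+1] (q, p')).1))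
      have n2 := norm_sub_le ((x.2 - y.2) - (p - p'))
        ((h / 2) • (gradient U x.1 - gradient U y.1))
      rw [smul_norm_eq (by linarith)] at n1 n2
      have t1 : (h / 2) * ‖gradient U x.1 - gradient U y.1‖
          ≤ (h / 2) * (L₁ * ((2 + L₁) ^ (2 * (k+1)) * ‖p - p'‖)) :=
        mul_le_mul_of_nonneg_left g1 (by linarith)
      have t2 : (h / 2) * ‖gradient U ((leapfrog U h)^[k+1] (q, p)).1
                - gradient U ((leapfrog U h)^[k+1] (q, p')).1‖
          ≤ (h / 2) * (L₁ * ((2 + L₁) ^ (2 * (k+1)) * ‖p - p'‖)) :=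
        mul_le_mul_of_nonneg_left g2 (by linarith)
      have t3 : (k : ℝ) * h * L₁ * (2 + L₁) ^ (2 * k) * ‖p - p'‖
          ≤ (k : ℝ) * h * L₁ * (2 + L₁) ^ (2 * (k + 1)) * ‖p - p'‖ := by
        have hc : (0:ℝ) ≤ (k : ℝ) * h * L₁ :=
          mul_nonneg (mul_nonneg (Nat.cast_nonneg k) hh) hL₁
        exact mul_le_mul_of_nonneg_right (mul_le_mul_of_nonneg_left hCk hc) hD
      push_cast
      linarith [ihv, t3, t1, t2, n1, n2]
    · -- position deviation
      have eu : (((leapfrog U h)^[k+1] (q, p)).1 - ((leapfrog U h)^[k+1] (q, p')).1)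
            - (((k : ℝ) + 1) * h) • (p - p')
          = ((x.1 - y.1) - ((k : ℝ) * h) • (p - p'))
            + h • ((x.2 - y.2) - (p - p'))
            - (h * h / 2) • (gradient U x.1 - gradient U y.1) := by
        rw [Function.iterate_succ_apply', Function.iterate_succ_apply', ← hx, ← hy]
        simp only [lf_fst]
        module
      have ecast : ((k : ℝ) + 1) = ((k + 1 : ℕ) : ℝ) := by push_cast; ring
      rw [← ecast, eu]
      have n1 := norm_sub_le (((x.1 - y.1) - ((k : ℝ) * h) • (p - p'))
            + h • ((x.2 - y.2) - (p - p')))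
        ((h * h / 2) • (gradient U x.1 - gradient U y.1))
      have n2 := norm_add_le ((x.1 - y.1) - ((k : ℝ) * h) • (p - p'))
        (h • ((x.2 - y.2) - (p - p')))
      have hhh : (0:ℝ) ≤ h * h / 2 := div_nonneg (mul_nonneg hh hh) two_pos.le
      rw [smul_norm_eq hh] at n2
      rw [smul_norm_eq hhh] at n1
      have t1 : h * ‖(x.2 - y.2) - (p - p')‖
          ≤ h * ((k : ℝ) * h * L₁ * (2 + L₁) ^ (2 * k) * ‖p - p'‖) :=
        mul_le_mul_of_nonneg_left ihv hh
      have t2 : (h * h / 2) * ‖gradient U x.1 - gradient U y.1‖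
          ≤ (h * h / 2) * (L₁ * ((2 + L₁) ^ (2 * (k+1)) * ‖p - p'‖)) :=
        mul_le_mul_of_nonneg_left g1 hhh
      have hk0 : (0 : ℝ) ≤ (k : ℝ) := Nat.cast_nonneg k
      have hsq : (0:ℝ) ≤ h ^ 2 := sq_nonneg h
      have m1 : (k : ℝ) * ((k : ℝ) + 1) * h ^ 2 * L₁ * (2 + L₁) ^ (2 * k) * ‖p - p'‖
          ≤ (k : ℝ) * ((k : ℝ) + 1) * h ^ 2 * L₁ * (2 + L₁) ^ (2 * (k + 1)) * ‖p - p'‖ := by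
        have hc : (0:ℝ) ≤ (k : ℝ) * ((k : ℝ) + 1) * h ^ 2 * L₁ :=
          mul_nonneg (mul_nonneg (mul_nonneg hk0 (by linarith)) hsq) hL₁
        exact mul_le_mul_of_nonneg_right (mul_le_mul_of_nonneg_left hCk hc) hD
      have m2 : (k : ℝ) * h ^ 2 * L₁ * (2 + L₁) ^ (2 * k) * ‖p - p'‖
          ≤ (k : ℝ) * h ^ 2 * L₁ * (2 + L₁) ^ (2 * (k + 1)) * ‖p - p'‖ := by
        have hc : (0:ℝ) ≤ (k : ℝ) * h ^ 2 * L₁ := mul_nonneg (mul_nonneg hk0 hsq) hL₁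
        exact mul_le_mul_of_nonneg_right (mul_le_mul_of_nonneg_left hCk hc) hD
      have m3 : (0:ℝ) ≤ h ^ 2 * L₁ * (2 + L₁) ^ (2 * (k + 1)) * ‖p - p'‖ :=
        mul_nonneg (mul_nonneg (mul_nonneg hsq hL₁) hCp0) hD
      have m4 : (0:ℝ) ≤ (k : ℝ) * (h ^ 2 * L₁ * (2 + L₁) ^ (2 * (k + 1)) * ‖p - p'‖) :=
        mul_nonneg hk0 m3
      push_cast
      push_cast at ihu
      linarith [ihu, t1, t2, n1, n2, m1, m2, m3, m4]

lemma lf_dev {L₁ : ℝ} (hL₁ : 0 ≤ L₁)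
    (hLip : ∀ q q', ‖gradient U q - gradient U q'‖ ≤ L₁ * ‖q - q'‖)
    (hh : 0 ≤ h) (h1 : h ≤ 1) (q p p' : EuclideanSpace ℝ (Fin d)) (T : ℕ) :
    ‖(((leapfrog U h)^[T] (q, p)).1 - ((leapfrog U h)^[T] (q, p')).1)
        - ((T : ℝ) * h) • (p - p')‖
      ≤ ((T : ℝ) * ((T : ℝ) + 1) * L₁ * (2 + L₁) ^ (2 * T)) * h ^ 2 * ‖p - p'‖ := by
  refine ((lf_linearize hL₁ hLip hh h1 q p p' T).2).trans_eq ?_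
  ring

lemma lf_lower {L₁ : ℝ} (hL₁ : 0 ≤ L₁)
    (hLip : ∀ q q', ‖gradient U q - gradient U q'‖ ≤ L₁ * ‖q - q'‖)
    (hh : 0 < h) (h1 : h ≤ 1) {T : ℕ}
    (hsmall : ((T : ℝ) * ((T : ℝ) + 1) * L₁ * (2 + L₁) ^ (2 * T)) * h ≤ (T : ℝ) / 2)
    (q p p' : EuclideanSpace ℝ (Fin d)) :
    (T : ℝ) * h / 2 * ‖p - p'‖
      ≤ ‖((leapfrog U h)^[T] (q, p)).1 - ((leapfrog U h)^[T] (q, p')).1‖ := by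
  set C₂ := (T : ℝ) * ((T : ℝ) + 1) * L₁ * (2 + L₁) ^ (2 * T) with hC₂
  have hdev := lf_dev hL₁ hLip hh.le h1 q p p' T
  have hD := norm_nonneg (p - p')
  have htri := norm_sub_norm_le (((T : ℝ) * h) • (p - p'))
    (((leapfrog U h)^[T] (q, p)).1 - ((leapfrog U h)^[T] (q, p')).1)
  rw [smul_norm_eq (by positivity)] at htri
  have hrev : ‖p' - p‖ = ‖p - p'‖ := norm_sub_rev _ _
  rw [norm_sub_rev] at hdev
  have hsm : C₂ * h ^ 2 * ‖p - p'‖ ≤ (T : ℝ) / 2 * h * ‖p - p'‖ := by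
    have := mul_le_mul_of_nonneg_right hsmall (mul_nonneg hh.le hD)
    nlinarith
  rw [← hC₂] at hdev
  linarith [htri, hdev, hsm]

lemma lf_surj {L₁ : ℝ} (hL₁ : 0 ≤ L₁)
    (hLip : ∀ q q', ‖gradient U q - gradient U q'‖ ≤ L₁ * ‖q - q'‖)
    (hh : 0 < h) (h1 : h ≤ 1) {T : ℕ} (hT : 1 ≤ T)
    (hsmall : ((T : ℝ) * ((T : ℝ) + 1) * L₁ * (2 + L₁) ^ (2 * T)) * h ≤ (T : ℝ) / 2)
    (q : EuclideanSpace ℝ (Fin d)) :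
    Function.Surjective (fun p : EuclideanSpace ℝ (Fin d) =>
      ((leapfrog U h)^[T] (q, p)).1) := by
  set C₂ := (T : ℝ) * ((T : ℝ) + 1) * L₁ * (2 + L₁) ^ (2 * T) with hC₂def
  have hC₂ : 0 ≤ C₂ := by positivity
  intro y
  have hT1 : (1 : ℝ) ≤ (T : ℝ) := by exact_mod_cast hT
  have hTh : 0 < (T : ℝ) * h := by positivity
  set ψ := fun p : EuclideanSpace ℝ (Fin d) => ((leapfrog U h)^[T] (q, p)).1 with hψ
  set c := ((T : ℝ) * h)⁻¹ with hc
  have hc0 : 0 < c := inv_pos.2 hTh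
  set F := fun p : EuclideanSpace ℝ (Fin d) => p + c • (y - ψ p) with hF
  have key0 : ∀ v : EuclideanSpace ℝ (Fin d), c • (((T : ℝ) * h) • v) = v := by
    intro v; rw [smul_smul, hc, inv_mul_cancel₀ hTh.ne', one_smul]
  have lip : LipschitzWith (1/2 : ℝ≥0) F := by
    refine LipschitzWith.of_dist_le_mul fun p p' => ?_
    rw [dist_eq_norm, dist_eq_norm]
    have e1 : F p - F p' = (p - p') - c • (ψ p - ψ p') := by
      simp only [hF]; module
    have e2 : (p - p') - c • (ψ p - ψ p')
        = c • ((((T : ℝ) * h)) • (p - p') - (ψ p - ψ p')) := by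
      conv_rhs => rw [smul_sub, key0]
    rw [e1, e2, smul_norm_eq hc0.le, norm_sub_rev]
    have hdev := lf_dev hL₁ hLip hh.le h1 q p p' T
    have hD := norm_nonneg (p - p')
    have hb : C₂ * h ^ 2 * ‖p - p'‖ ≤ ((T : ℝ) * h / 2) * ‖p - p'‖ := by
      have := mul_le_mul_of_nonneg_right hsmall (mul_nonneg hh.le hD)
      nlinarith
    have : c * ‖ψ p - ψ p' - ((T : ℝ) * h) • (p - p')‖
        ≤ c * (((T : ℝ) * h / 2) * ‖p - p'‖) :=
      mul_le_mul_of_nonneg_left (hdev.trans hb) hc0.le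
    have hcoe : ((1/2 : ℝ≥0) : ℝ) = 1/2 := by norm_num
    have heq : c * (((T : ℝ) * h / 2) * ‖p - p'‖) = ((1/2 : ℝ≥0) : ℝ) * ‖p - p'‖ := by
      rw [hcoe, hc]
      field_simp
      try ring
    exact this.trans heq.le
  have half_lt : (1/2 : ℝ≥0) < 1 := by
    rw [← NNReal.coe_lt_coe]; norm_num
  have cw : ContractingWith (1/2 : ℝ≥0) F := ⟨half_lt, lip⟩
  have hfix := cw.fixedPoint_isFixedPt
  refine ⟨ContractingWith.fixedPoint F cw, ?_⟩
  have h0 : c • (y - ψ (ContractingWith.fixedPoint F cw)) = 0 := by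
    have := hfix
    unfold Function.IsFixedPt at this
    simpa only [hF, add_eq_left] using this
  rcases smul_eq_zero.1 h0 with hc' | hy
  · exact absurd hc' hc0.ne'
  · exact (sub_eq_zero.1 hy).symm

lemma lf_cont (hg : Continuous (gradient U)) : Continuous (leapfrog U h) := by
  have h1 : Continuous fun x : EuclideanSpace ℝ (Fin d) × EuclideanSpace ℝ (Fin d) =>
      x.2 - (h/2) • gradient U x.1 :=
    continuous_snd.sub (Continuous.const_smul (g := fun x : EuclideanSpace ℝ (Fin d) × EuclideanSpace ℝ (Fin d) => gradient U x.1) (hg.comp continuous_fst) (h/2))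
  have h2 : Continuous fun x : EuclideanSpace ℝ (Fin d) × EuclideanSpace ℝ (Fin d) =>
      x.1 + h • (x.2 - (h/2) • gradient U x.1) :=
    continuous_fst.add (Continuous.const_smul (g := fun x : EuclideanSpace ℝ (Fin d) × EuclideanSpace ℝ (Fin d) => x.2 - (h/2) • gradient U x.1) h1 h)
  exact h2.prodMk (h1.sub (Continuous.const_smul (g := fun x : EuclideanSpace ℝ (Fin d) × EuclideanSpace ℝ (Fin d) => gradient U (x.1 + h • (x.2 - (h/2) • gradient U x.1))) (hg.comp h2) (h/2)))

lemma exists_delta (d : ℕ) : ∃ δ₀ : ℝ≥0, 0 < δ₀ ∧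
    ∀ (s : Set (EuclideanSpace ℝ (Fin d))) (f : EuclideanSpace ℝ (Fin d) → EuclideanSpace ℝ (Fin d)),
      ApproximatesLinearOn f (ContinuousLinearMap.id ℝ (EuclideanSpace ℝ (Fin d))) s δ₀ →
      volume (f '' s) ≤ 2 * volume s := by
  have hdet : ENNReal.ofReal |(ContinuousLinearMap.id ℝ (EuclideanSpace ℝ (Fin d))).det|
      < ((2 : ℝ≥0) : ℝ≥0∞) := by
    simp [ContinuousLinearMap.det]
  have hev := MeasureTheory.addHaar_image_le_mul_of_det_lt (volume)
    (ContinuousLinearMap.id ℝ (EuclideanSpace ℝ (Fin d))) hdet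
  obtain ⟨δ₀, hδ, hmem⟩ := (hev.and self_mem_nhdsWithin).exists
  refine ⟨δ₀, hmem, fun s f hf => ?_⟩
  have := hδ s f hf
  simpa using this

end aux

set_option maxHeartbeats 4000000 in
/-- under A1(1) (`β = 1`), for every `T ≥ 1` there exists `h̄_T > 0` such
that for all `h ∈ (0, h̄_T]` the Lebesgue measure is an irreducibility measure for the
HMC kernel and every compact set is small. -/
theorem hmc_irreducible_and_small_linear_growth {d : ℕ}
    (U : EuclideanSpace ℝ (Fin d) → ℝ)
    (hU : ContDiff ℝ 1 U)
    (L₁ : ℝ) (hL₁ : 0 ≤ L₁)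
    (hLip : ∀ q q' : EuclideanSpace ℝ (Fin d),
      ‖gradient U q - gradient U q'‖ ≤ L₁ * ‖q - q'‖)
    (M₁ : ℝ) (hM₁ : 0 ≤ M₁)
    (hGrowth : ∀ q : EuclideanSpace ℝ (Fin d), ‖gradient U q‖ ≤ M₁ * (1 + ‖q‖))
    (T : ℕ) (hT : 1 ≤ T) :
    ∃ hbar > (0 : ℝ), ∀ h ∈ Set.Ioc (0 : ℝ) hbar,
      (∀ A : Set (EuclideanSpace ℝ (Fin d)), MeasurableSet A → 0 < volume A →
        ∀ q : EuclideanSpace ℝ (Fin d), 0 < ∑' n : ℕ, hmcIter U h T (n + 1) q A) ∧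
      (∀ C : Set (EuclideanSpace ℝ (Fin d)), IsCompact C →
        ∃ ε > (0 : ℝ), ∃ M > (0 : ℝ), ∀ q ∈ C,
          ∀ A : Set (EuclideanSpace ℝ (Fin d)), MeasurableSet A →
            ENNReal.ofReal ε * volume (A ∩ Metric.ball (0 : EuclideanSpace ℝ (Fin d)) M) ≤
              hmcP U h T q A) := by
  classical
  have hGc : Continuous (gradient U) := by
    have : LipschitzWith (Real.toNNReal L₁) (gradient U) := by
      refine LipschitzWith.of_dist_le_mul fun x y => ?_
      rw [dist_eq_norm, dist_eq_norm, Real.coe_toNNReal L₁ hL₁]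
      exact hLip x y
    exact this.continuous
  obtain ⟨δ₀, hδ₀pos, hδ₀⟩ := exists_delta d
  set C₂ : ℝ := (T : ℝ) * ((T : ℝ) + 1) * L₁ * (2 + L₁) ^ (2 * T) with hC₂def
  have hC₂0 : 0 ≤ C₂ := by
    apply mul_nonneg (mul_nonneg (mul_nonneg (Nat.cast_nonneg T) (by positivity)) hL₁)
    positivity
  have hT1 : (1 : ℝ) ≤ (T : ℝ) := by exact_mod_cast hT
  have hδ₀R : (0 : ℝ) < (δ₀ : ℝ) := hδ₀pos
  refine ⟨min 1 (min ((T : ℝ) / (2 * C₂ + 2)) ((T : ℝ) * (δ₀ : ℝ) / (C₂ + 1))), by positivity, ?_⟩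
  rintro h ⟨hh0, hhle⟩
  have h1 : h ≤ 1 := hhle.trans (min_le_left _ _)
  have hsmall : C₂ * h ≤ (T : ℝ) / 2 := by
    have h2 : h ≤ (T : ℝ) / (2 * C₂ + 2) := hhle.trans ((min_le_right _ _).trans (min_le_left _ _))
    have h3 : C₂ * h ≤ C₂ * ((T : ℝ) / (2 * C₂ + 2)) := mul_le_mul_of_nonneg_left h2 hC₂0
    refine h3.trans ?_
    rw [mul_div_assoc'] at *
    rw [div_le_div_iff₀ (by linarith) (by norm_num)]
    nlinarith
  have hδsmall : C₂ * h ≤ (T : ℝ) * (δ₀ : ℝ) := by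
    have h2 : h ≤ (T : ℝ) * (δ₀ : ℝ) / (C₂ + 1) :=
      hhle.trans ((min_le_right _ _).trans (min_le_right _ _))
    have h3 : C₂ * h ≤ C₂ * ((T : ℝ) * (δ₀ : ℝ) / (C₂ + 1)) := mul_le_mul_of_nonneg_left h2 hC₂0
    refine h3.trans ?_
    rw [mul_div_assoc']
    rw [div_le_iff₀ (by linarith)]
    nlinarith
  have hTh : (0 : ℝ) < (T : ℝ) * h := by positivity
  -- continuity of the leapfrog position map
  have hψc : ∀ q : EuclideanSpace ℝ (Fin d),
      Continuous fun p : EuclideanSpace ℝ (Fin d) => ((leapfrog U h)^[T] (q, p)).1 :=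
    fun q => continuous_fst.comp (((lf_cont hGc).iterate T).comp (Continuous.prodMk_right q))
  -- the master smallness estimate
  have key : ∀ C : Set (EuclideanSpace ℝ (Fin d)), IsCompact C → ∀ M : ℝ, 0 < M →
      ∃ ε > (0 : ℝ), ∀ q ∈ C, ∀ A : Set (EuclideanSpace ℝ (Fin d)), MeasurableSet A →
        ENNReal.ofReal ε * volume (A ∩ Metric.ball (0 : EuclideanSpace ℝ (Fin d)) M) ≤
          hmcP U h T q A := by
    intro C hC M hM
    obtain ⟨K₀, hK₀⟩ := hC.isBounded.subset_closedBall (0 : EuclideanSpace ℝ (Fin d))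
    set K : ℝ := max K₀ 0 with hKdef
    have hK : C ⊆ Metric.closedBall 0 K :=
      hK₀.trans (Metric.closedBall_subset_closedBall (le_max_left _ _))
    have hK0 : 0 ≤ K := le_max_right _ _
    have hbase : (1 : ℝ) ≤ (2 + M₁) ^ (3 * T) := by
      have := pow_le_pow_left₀ (by norm_num : (0:ℝ) ≤ 1) (by linarith : (1:ℝ) ≤ 2 + M₁) (3 * T)
      simpa using this
    set S' : ℝ := (2 + M₁) ^ (3 * T) * (1 + K) with hS'def
    have hS'0 : 0 < S' := by nlinarith
    set R : ℝ := 2 * (M + S') / ((T : ℝ) * h) with hRdef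
    have hR0 : 0 < R := by positivity
    set S : ℝ := (2 + M₁) ^ (3 * T) * (1 + K + R) with hSdef
    have hS0 : 0 < S := by nlinarith
    obtain ⟨B₀, hB₀⟩ := (isCompact_closedBall (0 : EuclideanSpace ℝ (Fin d)) S).exists_bound_of_continuousOn
      hU.continuous.continuousOn
    set BU : ℝ := max B₀ 0 with hBUdef
    have hBU0 : 0 ≤ BU := le_max_right _ _
    set B : ℝ := 2 * BU + S ^ 2 / 2 with hBdef
    have hB0 : 0 ≤ B := by positivity
    set coeff : ℝ := (2 * π) ^ (-(d : ℝ) / 2) with hcoeffdef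
    have hcoeff0 : 0 < coeff := Real.rpow_pos_of_pos (by positivity) _
    set ε₀ : ℝ := coeff * (Real.exp (-B) * Real.exp (-R ^ 2 / 2)) with hε₀def
    have hε₀pos : 0 < ε₀ := by positivity
    refine ⟨ε₀ / (2 * ((T : ℝ) * h) ^ d), by positivity, ?_⟩
    intro q hq A hA
    have hqK : ‖q‖ ≤ K := mem_closedBall_zero_iff.1 (hK hq)
    set ψ : EuclideanSpace ℝ (Fin d) → EuclideanSpace ℝ (Fin d) :=
      fun p => ((leapfrog U h)^[T] (q, p)).1 with hψdef
    have hψm : Measurable ψ := (hψc q).measurable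
    have hsurj : Function.Surjective ψ := lf_surj hL₁ hLip hh0 h1 hT hsmall q
    set S₂ : Set (EuclideanSpace ℝ (Fin d)) := ψ ⁻¹' (A ∩ Metric.ball 0 M) with hS₂def
    have hS₂m : MeasurableSet S₂ := hψm (hA.inter measurableSet_ball)
    -- points of S₂ have norm at most R
    have hpre : ∀ p ∈ S₂, ‖p‖ ≤ R := by
      intro p hp
      have hball : ‖ψ p‖ < M := by
        have := hp.2
        simpa [mem_ball_zero_iff] using mem_ball_zero_iff.1 this
      have hlow := lf_lower hL₁ hLip hh0 h1 hsmall q p 0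
      have hψ0 : ‖ψ 0‖ ≤ S' := by
        have hg := iter_growth hM₁ hGrowth hh0.le h1 (q, (0 : EuclideanSpace ℝ (Fin d))) T
        simp only [norm_zero] at hg
        have : (2 + M₁) ^ (3 * T) * (1 + ‖q‖ + 0) ≤ (2 + M₁) ^ (3 * T) * (1 + K) :=
          mul_le_mul_of_nonneg_left (by linarith) (by positivity)
        have hn := norm_nonneg (((leapfrog U h)^[T] (q, (0 : EuclideanSpace ℝ (Fin d)))).2)
        simp only [hψdef]
        nlinarith [hg]
      have htr : ‖ψ p - ψ 0‖ ≤ ‖ψ p‖ + ‖ψ 0‖ := norm_sub_le _ _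
      have : (T : ℝ) * h / 2 * ‖p‖ ≤ M + S' := by
        have hsub : ‖p - 0‖ = ‖p‖ := by simp
        rw [hsub] at hlow
        have := hlow.trans htr
        linarith
      rw [hRdef, le_div_iff₀ hTh]
      nlinarith
    -- pointwise density lower bound on S₂
    have hpoint : ∀ p : EuclideanSpace ℝ (Fin d), ‖p‖ ≤ R →
        ε₀ ≤ (2 * π) ^ (-(d : ℝ) / 2) *
          hmcAccept U (q, p) ((leapfrog U h)^[T] (q, p)) * Real.exp (-‖p‖ ^ 2 / 2) := by
      intro p hpR
      have hg := iter_growth hM₁ hGrowth hh0.le h1 (q, p) T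
      have htraj : 1 + ‖((leapfrog U h)^[T] (q, p)).1‖ + ‖((leapfrog U h)^[T] (q, p)).2‖ ≤ S := by
        refine hg.trans ?_
        rw [hSdef]
        refine mul_le_mul_of_nonneg_left (by simp only; linarith) (by positivity)
      have hqS : ‖q‖ ≤ S := by nlinarith
      have hq1 : ‖((leapfrog U h)^[T] (q, p)).1‖ ≤ S := by
        have := norm_nonneg ((leapfrog U h)^[T] (q, p)).2; linarith
      have hq2 : ‖((leapfrog U h)^[T] (q, p)).2‖ ≤ S := by
        have := norm_nonneg ((leapfrog U h)^[T] (q, p)).1; linarith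
      have hUq : ‖U q‖ ≤ BU :=
        le_trans (hB₀ q (mem_closedBall_zero_iff.2 hqS)) (le_max_left _ _)
      have hUqT : ‖U ((leapfrog U h)^[T] (q, p)).1‖ ≤ BU :=
        le_trans (hB₀ _ (mem_closedBall_zero_iff.2 hq1)) (le_max_left _ _)
      rw [Real.norm_eq_abs, abs_le] at hUq hUqT
      have hacc : Real.exp (-B) ≤ hmcAccept U (q, p) ((leapfrog U h)^[T] (q, p)) := by
        rw [hmcAccept]
        refine le_min (Real.exp_le_one_iff.2 (by linarith)) (Real.exp_le_exp.2 ?_)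
        show -B ≤ (U q + ‖p‖ ^ 2 / 2)
          - (U ((leapfrog U h)^[T] (q, p)).1 + ‖((leapfrog U h)^[T] (q, p)).2‖ ^ 2 / 2)
        have hpT2 : ‖((leapfrog U h)^[T] (q, p)).2‖ ^ 2 ≤ S ^ 2 :=
          pow_le_pow_left₀ (norm_nonneg _) hq2 2
        have hp2 : (0:ℝ) ≤ ‖p‖ ^ 2 := sq_nonneg _
        rw [hBdef]
        nlinarith
      have hexpp : Real.exp (-R ^ 2 / 2) ≤ Real.exp (-‖p‖ ^ 2 / 2) := by
        refine Real.exp_le_exp.2 ?_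
        have : ‖p‖ ^ 2 ≤ R ^ 2 := pow_le_pow_left₀ (norm_nonneg p) hpR 2
        linarith
      have hacc0 : (0:ℝ) ≤ hmcAccept U (q, p) ((leapfrog U h)^[T] (q, p)) :=
        le_trans (Real.exp_pos _).le hacc
      calc ε₀ = coeff * (Real.exp (-B) * Real.exp (-R ^ 2 / 2)) := rfl
        _ ≤ coeff * (hmcAccept U (q, p) ((leapfrog U h)^[T] (q, p)) * Real.exp (-‖p‖ ^ 2 / 2)) := by
            refine mul_le_mul_of_nonneg_left ?_ hcoeff0.le
            exact mul_le_mul hacc hexpp (Real.exp_pos _).le hacc0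
        _ = (2 * π) ^ (-(d : ℝ) / 2) *
              hmcAccept U (q, p) ((leapfrog U h)^[T] (q, p)) * Real.exp (-‖p‖ ^ 2 / 2) := by
            rw [hcoeffdef]; ring
    -- the image measure bound
    have hδim : volume (A ∩ Metric.ball 0 M)
        ≤ (2 * ENNReal.ofReal (((T : ℝ) * h) ^ d)) * volume S₂ := by
      have himage : A ∩ Metric.ball 0 M = ψ '' S₂ :=
        (Set.image_preimage_eq _ hsurj).symm
      set ft : EuclideanSpace ℝ (Fin d) → EuclideanSpace ℝ (Fin d) :=
        fun p => ((T : ℝ) * h)⁻¹ • ψ p with hftdef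
      have key0 : ∀ v : EuclideanSpace ℝ (Fin d), ((T : ℝ) * h)⁻¹ • (((T : ℝ) * h) • v) = v :=
        fun v => by rw [smul_smul, inv_mul_cancel₀ hTh.ne', one_smul]
      have happrox : ApproximatesLinearOn ft
          (ContinuousLinearMap.id ℝ (EuclideanSpace ℝ (Fin d))) S₂ δ₀ := by
        intro x hx y hy
        simp only [ContinuousLinearMap.id_apply]
        have e1 : ft x - ft y - (x - y)
            = ((T : ℝ) * h)⁻¹ • ((ψ x - ψ y) - ((T : ℝ) * h) • (x - y)) := by
          rw [smul_sub, smul_sub, key0]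
        rw [e1, smul_norm_eq (by positivity)]
        have hdev := lf_dev hL₁ hLip hh0.le h1 q x y T
        have hcd : ((T : ℝ) * h)⁻¹ * (C₂ * h ^ 2 * ‖x - y‖) ≤ (δ₀ : ℝ) * ‖x - y‖ := by
          have hstep : C₂ * h ^ 2 ≤ (T : ℝ) * (δ₀ : ℝ) * h := by nlinarith
          have := mul_le_mul_of_nonneg_right hstep (norm_nonneg (x - y))
          have h4 := mul_le_mul_of_nonneg_left this (by positivity : (0:ℝ) ≤ ((T : ℝ) * h)⁻¹)
          refine h4.trans ?_
          rw [show ((T : ℝ) * h)⁻¹ * ((T : ℝ) * (δ₀ : ℝ) * h * ‖x - y‖)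
              = ((δ₀ : ℝ) * ‖x - y‖) * (((T : ℝ) * h)⁻¹ * ((T : ℝ) * h)) by ring,
            inv_mul_cancel₀ hTh.ne', mul_one]
        refine le_trans ?_ hcd
        refine mul_le_mul_of_nonneg_left ?_ (by positivity)
        exact hdev
      have h2 := hδ₀ S₂ ft happrox
      have heq : ψ '' S₂ = ((T : ℝ) * h) • (ft '' S₂) := by
        rw [← Set.image_smul, Set.image_image]
        refine (Set.image_congr fun p _ => ?_).symm
        simp only [hftdef]
        rw [smul_inv_smul₀ hTh.ne']
      rw [himage, heq, Measure.addHaar_smul, finrank_euclideanSpace_fin,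
        abs_of_pos (pow_pos hTh d)]
      calc ENNReal.ofReal (((T : ℝ) * h) ^ d) * volume (ft '' S₂)
          ≤ ENNReal.ofReal (((T : ℝ) * h) ^ d) * (2 * volume S₂) := by gcongr
        _ = (2 * ENNReal.ofReal (((T : ℝ) * h) ^ d)) * volume S₂ := by ring
    -- assemble
    set dens : EuclideanSpace ℝ (Fin d) → ℝ≥0∞ := fun p => ENNReal.ofReal
      ((2 * π) ^ (-(d : ℝ) / 2) * hmcAccept U (q, p) ((leapfrog U h)^[T] (q, p)) *
        Real.exp (-‖p‖ ^ 2 / 2)) with hdensdef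
    have hdensm : Measurable dens := by
      have hHc : Continuous (hamiltonian U) := by
        have : Continuous fun x : EuclideanSpace ℝ (Fin d) × EuclideanSpace ℝ (Fin d) =>
            U x.1 + ‖x.2‖ ^ 2 / 2 :=
          (hU.continuous.comp continuous_fst).add
            (((continuous_norm.comp continuous_snd).pow 2).div_const 2)
        exact this
      have hIter : Continuous fun p : EuclideanSpace ℝ (Fin d) => (leapfrog U h)^[T] (q, p) :=
        ((lf_cont hGc).iterate T).comp (Continuous.prodMk_right q)
      have haccc : Continuous fun p : EuclideanSpace ℝ (Fin d) =>
          hmcAccept U (q, p) ((leapfrog U h)^[T] (q, p)) := by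
        have : Continuous fun p : EuclideanSpace ℝ (Fin d) =>
            min 1 (Real.exp (hamiltonian U (q, p) - hamiltonian U ((leapfrog U h)^[T] (q, p)))) :=
          continuous_const.min (Real.continuous_exp.comp
            ((hHc.comp (Continuous.prodMk_right q)).sub (hHc.comp hIter)))
        exact this
      have hreal : Continuous fun p : EuclideanSpace ℝ (Fin d) =>
          (2 * π) ^ (-(d : ℝ) / 2) * hmcAccept U (q, p) ((leapfrog U h)^[T] (q, p)) *
            Real.exp (-‖p‖ ^ 2 / 2) :=
        ((continuous_const.mul haccc).mul
          (Real.continuous_exp.comp (((continuous_norm.pow 2).neg).div_const 2)))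
      exact (ENNReal.continuous_ofReal.comp hreal).measurable
    have hchain : ENNReal.ofReal ε₀ * volume S₂ ≤ hmcP U h T q A := by
      have hc1 : ENNReal.ofReal ε₀ * volume S₂ ≤ ∫⁻ p in S₂, dens p ∂volume := by
        rw [← setLIntegral_const]
        refine setLIntegral_mono hdensm fun p hp => ?_
        exact ENNReal.ofReal_le_ofReal (hpoint p (hpre p hp))
      have hc2 : ∫⁻ p in S₂, dens p ∂volume ≤ (volume.withDensity dens) (ψ ⁻¹' A) := by
        rw [withDensity_apply _ (hψm hA)]
        exact lintegral_mono_set (Set.preimage_mono Set.inter_subset_left)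
      have hc3 : (volume.withDensity dens) (ψ ⁻¹' A) = Measure.map ψ (volume.withDensity dens) A :=
        (Measure.map_apply hψm hA).symm
      refine hc1.trans (hc2.trans (hc3.le.trans ?_))
      rw [hmcP, Measure.add_apply]
      exact le_self_add
    -- final combination
    calc ENNReal.ofReal (ε₀ / (2 * ((T : ℝ) * h) ^ d)) * volume (A ∩ Metric.ball 0 M)
        ≤ ENNReal.ofReal (ε₀ / (2 * ((T : ℝ) * h) ^ d)) *
            ((2 * ENNReal.ofReal (((T : ℝ) * h) ^ d)) * volume S₂) := by gcongr
      _ = ENNReal.ofReal ε₀ * volume S₂ := by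
          rw [← mul_assoc]
          congr 1
          rw [show (2 : ℝ≥0∞) = ENNReal.ofReal 2 by simp, ← ENNReal.ofReal_mul (by norm_num),
            ← ENNReal.ofReal_mul (by positivity)]
          congr 1
          field_simp
      _ ≤ hmcP U h T q A := hchain
  -- conclude the two statements
  refine ⟨?_, ?_⟩
  · intro A hA hvol q
    have hMn : ∃ n : ℕ, 0 < volume (A ∩ Metric.ball (0 : EuclideanSpace ℝ (Fin d)) ((n : ℝ) + 1)) := by
      by_contra hcon
      push_neg at hcon
      have hz : ∀ n : ℕ, volume (A ∩ Metric.ball (0 : EuclideanSpace ℝ (Fin d)) ((n : ℝ) + 1)) = 0 :=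
        fun n => le_antisymm (hcon n) bot_le
      have hsub : A ⊆ ⋃ n : ℕ, A ∩ Metric.ball (0 : EuclideanSpace ℝ (Fin d)) ((n : ℝ) + 1) := by
        intro a ha
        obtain ⟨n, hn⟩ := exists_nat_gt ‖a‖
        exact Set.mem_iUnion.2 ⟨n, ha, mem_ball_zero_iff.2 (by linarith)⟩
      have : volume A = 0 := by
        refine le_antisymm ?_ bot_le
        refine (measure_mono hsub).trans ?_
        refine (measure_iUnion_le _).trans ?_
        simp [hz]
      exact absurd this hvol.ne'
    obtain ⟨n, hn⟩ := hMn
    obtain ⟨ε, hε, hkey⟩ := key {q} isCompact_singleton ((n : ℝ) + 1) (by positivity)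
    have hP : 0 < hmcP U h T q A := by
      refine lt_of_lt_of_le ?_ (hkey q rfl A hA)
      exact ENNReal.mul_pos (ENNReal.ofReal_pos.2 hε).ne' hn.ne'
    have h1iter : hmcIter U h T 1 q = hmcP U h T q := Measure.bind_dirac
    refine lt_of_lt_of_le ?_ (ENNReal.le_tsum 0)
    simpa [h1iter] using hP
  · intro C hC
    obtain ⟨ε, hε, hkey⟩ := key C hC 1 one_pos
    exact ⟨ε, hε, 1, one_pos, fun q hq A hA => hkey q hq A hA⟩
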